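/- The stable self-similar Burgers profile satisfies the weighted bounds \(|\overline{W}(y)| \le (1+y^2)^{1/6}\), \(|\overline{W}'(y)| \le (1+y^2)^{-1/3}\), and \(|\overline{W}''(y)| \le (1+y^2)^{-5/6}\) for every real y, where \(\overline{W}'\) and \(\overline{W}''\) denote the first and second derivatives. -/

import Mathlib

/-- The stable self-similar Burgers profile. -/
noncomputable def burgersW (y : ℝ) : ℝ :=
  (-(y / 2) + Real.sqrt (1 / 27 + y ^ 2 / 4)) ^ ((1 : ℝ) / 3)
    - (y / 2 + Real.sqrt (1 / 27 + y ^ 2 / 4)) ^ ((1 : ℝ) / 3)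

lemma burgersW_cubic (y : ℝ) : (burgersW y) ^ 3 + burgersW y + y = 0 := by
  set s := Real.sqrt (1 / 27 + y ^ 2 / 4) with hs_def
  have hnn : (0:ℝ) ≤ 1 / 27 + y ^ 2 / 4 := by positivity
  have hs2 : s ^ 2 = 1 / 27 + y ^ 2 / 4 := Real.sq_sqrt hnn
  have hsnn : 0 ≤ s := Real.sqrt_nonneg _
  have hA : 0 < -(y / 2) + s := by nlinarith [sq_nonneg (s - y/2), sq_nonneg (s + y/2)]
  have hB : 0 < y / 2 + s := by nlinarith [sq_nonneg (s - y/2), sq_nonneg (s + y/2)]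
  set a := (-(y / 2) + s) ^ ((1 : ℝ) / 3) with ha_def
  set b := (y / 2 + s) ^ ((1 : ℝ) / 3) with hb_def
  have ha3 : a ^ 3 = -(y / 2) + s := by
    rw [ha_def, ← Real.rpow_natCast (_ ^ ((1:ℝ)/3)) 3, ← Real.rpow_mul hA.le]
    norm_num
  have hb3 : b ^ 3 = y / 2 + s := by
    rw [hb_def, ← Real.rpow_natCast (_ ^ ((1:ℝ)/3)) 3, ← Real.rpow_mul hB.le]
    norm_num
  have hab : a * b = 1 / 3 := by
    rw [ha_def, hb_def, ← Real.mul_rpow hA.le hB.le]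
    have : (-(y / 2) + s) * (y / 2 + s) = 1 / 27 := by nlinarith [hs2]
    rw [this, show (1:ℝ)/27 = (1/3) ^ (3:ℕ) by norm_num, ← Real.rpow_natCast ((1:ℝ)/3) 3,
      ← Real.rpow_mul (by norm_num)]
    norm_num
  have hw : burgersW y = a - b := rfl
  have expand : (a - b) ^ 3 = a ^ 3 - b ^ 3 - 3 * (a * b) * (a - b) := by ring
  rw [hw, expand, ha3, hb3, hab]
  ring

lemma burgersW_continuous : Continuous burgersW := by
  unfold burgersW
  have hs : Continuous fun y : ℝ => Real.sqrt (1 / 27 + y ^ 2 / 4) := by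
    exact (continuous_const.add ((continuous_pow 2).div_const 4)).sqrt
  apply Continuous.sub
  · exact ((continuous_id.div_const 2).neg.add hs).rpow_const
      (fun x => Or.inr (by norm_num))
  · exact ((continuous_id.div_const 2).add hs).rpow_const
      (fun x => Or.inr (by norm_num))

lemma burgersW_hasDerivAt (y : ℝ) :
    HasDerivAt burgersW (-(1 + 3 * (burgersW y) ^ 2))⁻¹ y := by
  have hf : HasDerivAt (fun w : ℝ => -w - w ^ 3) (-(1 + 3 * (burgersW y) ^ 2)) (burgersW y) := by
    have h1 : HasDerivAt (fun w : ℝ => -w - w ^ 3)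
        (-1 - (3 : ℕ) * (burgersW y) ^ (3 - 1)) (burgersW y) :=
      (hasDerivAt_id _).neg.sub (hasDerivAt_pow 3 _)
    convert h1 using 1
    push_cast
    ring
  refine HasDerivAt.of_local_left_inverse burgersW_continuous.continuousAt hf ?_ ?_
  · nlinarith [sq_nonneg (burgersW y)]
  · filter_upwards with z
    have := burgersW_cubic z
    linarith

lemma burgersW_deriv : deriv burgersW = fun y => (-(1 + 3 * (burgersW y) ^ 2))⁻¹ := by
  funext y
  exact (burgersW_hasDerivAt y).deriv

lemma burgersW_deriv2 (y : ℝ) :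
    iteratedDeriv 2 burgersW y = -(6 * burgersW y) / (1 + 3 * (burgersW y) ^ 2) ^ 3 := by
  have hpos : (0:ℝ) < 1 + 3 * (burgersW y) ^ 2 := by positivity
  have hW := burgersW_hasDerivAt y
  have hinner : HasDerivAt (fun z => -(1 + 3 * (burgersW z) ^ 2))
      (-(3 * (2 * burgersW y) * (-(1 + 3 * (burgersW y) ^ 2))⁻¹)) y := by
    have h2 : HasDerivAt (fun z => (burgersW z) ^ 2)
        (2 * burgersW y * (-(1 + 3 * (burgersW y) ^ 2))⁻¹) y := by
      have := hW.fun_pow 2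
      simpa using this
    have := ((h2.const_mul (3:ℝ)).const_add (1:ℝ)).fun_neg
    refine this.congr_deriv ?_
    ring
  have hmain : HasDerivAt (fun z => (-(1 + 3 * (burgersW z) ^ 2))⁻¹)
      (-(-(3 * (2 * burgersW y) * (-(1 + 3 * (burgersW y) ^ 2))⁻¹)) /
        (-(1 + 3 * (burgersW y) ^ 2)) ^ 2) y :=
    hinner.inv (by nlinarith)
  rw [iteratedDeriv_succ, iteratedDeriv_one, burgersW_deriv]
  rw [hmain.deriv]
  set w := burgersW y
  have hd : (1 + 3 * w ^ 2) ≠ 0 := ne_of_gt hpos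
  generalize hdg : (1 + 3 * w ^ 2) = d at hd ⊢
  rw [inv_neg]
  field_simp
  ring

lemma burgersW_poly_ineq (w : ℝ) :
    46656 * w ^ 6 * (1 + (w + w ^ 3) ^ 2) ^ 5 ≤ (1 + 3 * w ^ 2) ^ 18 := by
  have key : (1 + 3 * w ^ 2) ^ 18 - 46656 * w ^ 6 * (1 + (w + w ^ 3) ^ 2) ^ 5 =
      54 * (w - (729/5) * w ^ 5) ^ 2 + 1377 * (w ^ 2 - (13/4) * w ^ 4) ^ 2 +
      (1 + (729/10) * w ^ 6 + (567/16) * w ^ 8 + (24786/25) * w ^ 10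
        + 10967076 * w ^ 12 + 63767088 * w ^ 14 + 276318702 * w ^ 16
        + 940191300 * w ^ 18 + 2561704542 * w ^ 20 + 5612798448 * w ^ 22
        + 9842342724 * w ^ 24 + 13641870312 * w ^ 26 + 14624221140 * w ^ 28
        + 11702876112 * w ^ 30 + 6584048793 * w ^ 32 + 2324056374 * w ^ 34
        + 387373833 * w ^ 36) := by ring
  have h1 : (0:ℝ) ≤
      54 * (w - (729/5) * w ^ 5) ^ 2 + 1377 * (w ^ 2 - (13/4) * w ^ 4) ^ 2 +
      (1 + (729/10) * w ^ 6 + (567/16) * w ^ 8 + (24786/25) * w ^ 10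
        + 10967076 * w ^ 12 + 63767088 * w ^ 14 + 276318702 * w ^ 16
        + 940191300 * w ^ 18 + 2561704542 * w ^ 20 + 5612798448 * w ^ 22
        + 9842342724 * w ^ 24 + 13641870312 * w ^ 26 + 14624221140 * w ^ 28
        + 11702876112 * w ^ 30 + 6584048793 * w ^ 32 + 2324056374 * w ^ 34
        + 387373833 * w ^ 36) := by positivity
  linarith [key, h1]

/-- Weighted estimates: for all real `y`,
`|W̄(y)| ≤ (1+y²)^(1/6)`, `|W̄'(y)| ≤ (1+y²)^(-1/3)`, `|W̄''(y)| ≤ (1+y²)^(-5/6)`. -/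
theorem burgersW_weighted_bounds (y : ℝ) :
    |burgersW y| ≤ (1 + y ^ 2) ^ ((1 : ℝ) / 6) ∧
      |deriv burgersW y| ≤ (1 + y ^ 2) ^ (-(1 : ℝ) / 3) ∧
      |iteratedDeriv 2 burgersW y| ≤ (1 + y ^ 2) ^ (-(5 : ℝ) / 6) := by
  set w := burgersW y with hw
  have hc := burgersW_cubic y
  have hy : y = -(w + w ^ 3) := by linarith
  have hQ : (0:ℝ) < 1 + y ^ 2 := by positivity
  have hd : (0:ℝ) < 1 + 3 * w ^ 2 := by positivity
  refine ⟨?_, ?_, ?_⟩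
  · -- first bound
    rw [← pow_le_pow_iff_left₀ (abs_nonneg w) (Real.rpow_nonneg hQ.le _) (n := 6) (by norm_num)]
    have hr : ((1 + y ^ 2) ^ ((1:ℝ)/6)) ^ (6:ℕ) = 1 + y ^ 2 := by
      rw [← Real.rpow_natCast ((1 + y ^ 2) ^ ((1:ℝ)/6)) 6, ← Real.rpow_mul hQ.le]
      norm_num
    rw [hr, ← abs_pow]
    rw [abs_of_nonneg (by positivity : (0:ℝ) ≤ w ^ 6)]
    rw [hy]
    nlinarith [sq_nonneg w, sq_nonneg (w ^ 2), sq_nonneg (w + w ^ 3)]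
  · -- derivative bound
    have hder : deriv burgersW y = (-(1 + 3 * w ^ 2))⁻¹ := (burgersW_hasDerivAt y).deriv
    rw [hder, inv_neg, abs_neg, abs_inv, abs_of_pos hd]
    rw [show -(1:ℝ)/3 = -(1/3) by norm_num, Real.rpow_neg hQ.le]
    apply inv_anti₀ (Real.rpow_pos_of_pos hQ _)
    rw [← pow_le_pow_iff_left₀ (Real.rpow_nonneg hQ.le _) (by positivity) (n := 3) (by norm_num)]
    have hr : ((1 + y ^ 2) ^ ((1:ℝ)/3)) ^ (3:ℕ) = 1 + y ^ 2 := by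
      rw [← Real.rpow_natCast ((1 + y ^ 2) ^ ((1:ℝ)/3)) 3, ← Real.rpow_mul hQ.le]
      norm_num
    rw [hr, hy]
    nlinarith [sq_nonneg w, sq_nonneg (w ^ 2), sq_nonneg (w ^ 3)]
  · -- second derivative bound
    have hder2 : iteratedDeriv 2 burgersW y = -(6 * w) / (1 + 3 * w ^ 2) ^ 3 := burgersW_deriv2 y
    rw [hder2, abs_div, abs_neg, abs_of_pos (by positivity : (0:ℝ) < (1 + 3 * w ^ 2) ^ 3)]
    rw [show -(5:ℝ)/6 = -(5/6) by norm_num, Real.rpow_neg hQ.le]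
    rw [div_le_iff₀ (by positivity), inv_mul_eq_div, le_div_iff₀ (Real.rpow_pos_of_pos hQ _)]
    have key : |6 * w| * (1 + y ^ 2) ^ ((5:ℝ)/6) ≤ (1 + 3 * w ^ 2) ^ 3 := by
      rw [← pow_le_pow_iff_left₀
        (mul_nonneg (abs_nonneg _) (Real.rpow_nonneg hQ.le _)) (by positivity) (n := 6)
        (by norm_num)]
      have hr : ((1 + y ^ 2) ^ ((5:ℝ)/6)) ^ (6:ℕ) = (1 + y ^ 2) ^ (5:ℕ) := by
        rw [← Real.rpow_natCast ((1 + y ^ 2) ^ ((5:ℝ)/6)) 6, ← Real.rpow_mul hQ.le,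
          ← Real.rpow_natCast (1 + y ^ 2) 5]
        norm_num
      rw [mul_pow, hr, ← abs_pow, abs_of_nonneg (by positivity : (0:ℝ) ≤ (6*w) ^ 6)]
      calc (6*w) ^ 6 * (1 + y ^ 2) ^ (5:ℕ) = 46656 * w ^ 6 * (1 + (w + w ^ 3) ^ 2) ^ 5 := by
            rw [hy]; ring
        _ ≤ (1 + 3 * w ^ 2) ^ 18 := burgersW_poly_ineq w
        _ = ((1 + 3 * w ^ 2) ^ 3) ^ 6 := by ring
    calc |6 * w| * (1 + y ^ 2) ^ ((5:ℝ)/6) ≤ (1 + 3 * w ^ 2) ^ 3 := key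
      _ = (1 + 3 * w ^ 2) ^ 3 := rfl
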